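/- In the block construction, the enlarged family F' = F ∪ { [n] ∖ {j} : j ∈ [n] } is union-closed and separates the points of [n]. -/
import Mathlib


open Finset

/-- A family of finite sets is union-closed if it contains the union of any two of
its members. -/
def UnionClosed {α : Type*} [DecidableEq α] (F : Finset (Finset α)) : Prop :=
  ∀ A ∈ F, ∀ B ∈ F, A ∪ B ∈ F

/-- The abundance of `x` with respect to a family `F`. -/
noncomputable def abundance {α : Type*} [DecidableEq α] (F : Finset (Finset α)) (x : α) : ℝ :=
  ((F.filter (fun A => x ∈ A)).card : ℝ) / (F.card : ℝ)

/-- The average overlap density of `F`. -/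
noncomputable def AOD {α : Type*} [DecidableEq α] (F : Finset (Finset α)) : ℝ :=
  (1 / (((F.erase ∅).card : ℝ))) *
    ∑ A ∈ F.erase ∅, (1 / (A.card : ℝ)) * ∑ x ∈ A, abundance F x

/-- The union-closed family generated by `G = {B i ∪ {j} : i, j ∈ T}`:
all unions of nonempty subcollections of `G`. -/
def blockFamily {n m : ℕ} (B : Fin m → Finset (Fin n)) (T : Finset (Fin n)) :
    Finset (Finset (Fin n)) :=
  ((((univ : Finset (Fin m)) ×ˢ T).image (fun p => B p.1 ∪ {p.2})).powerset.filter
      (fun C => C.Nonempty)).image (fun C => C.sup id)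

/-- In the block construction, the enlarged family
`F' = F ∪ {[n] ∖ {j} : j ∈ [n]}` is union-closed and separates the points of `[n]`. -/
theorem blockFamily_enlarged_unionClosed_separating
    (k m s : ℕ) (hk : 0 < k) (hm : 2 ≤ m) (hs : 0 < s) (hsk : s + 2 ≤ k)
    (B : Fin m → Finset (Fin (k * m)))
    (hBcard : ∀ i, (B i).card = k)
    (hBdisj : ∀ i j : Fin m, i ≠ j → Disjoint (B i) (B j))
    (hBcover : (Finset.univ : Finset (Fin m)).biUnion B = (Finset.univ : Finset (Fin (k * m))))
    (T : Fin m → Finset (Fin (k * m)))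
    (hT : ∀ i, T i ⊆ B i) (hTcard : ∀ i, (T i).card = s)
    :
    UnionClosed (blockFamily B ((univ : Finset (Fin m)).biUnion T) ∪
        (univ : Finset (Fin (k * m))).image (fun j => univ.erase j)) ∧
    ∀ i j : Fin (k * m), i ≠ j →
      ∃ A ∈ blockFamily B ((univ : Finset (Fin m)).biUnion T) ∪
          (univ : Finset (Fin (k * m))).image (fun j => univ.erase j),
        (A ∩ {i, j}).card = 1 := by

  classical
  set TT := (univ : Finset (Fin m)).biUnion T with hTT
  set G := (((univ : Finset (Fin m)) ×ˢ TT).image (fun p => B p.1 ∪ {p.2})) with hG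
  have hm0 : 0 < m := lt_of_lt_of_le two_pos hm
  have hmem : ∀ A, A ∈ blockFamily B TT ↔
      ∃ C, (C ⊆ G ∧ C.Nonempty) ∧ C.sup id = A := by
    intro A
    simp [blockFamily, Finset.mem_image, Finset.mem_filter, Finset.mem_powerset, hG]
  -- univ ∈ blockFamily
  have hTne : TT.Nonempty := by
    have : (T ⟨0, hm0⟩).Nonempty := by
      rw [← Finset.card_pos, hTcard]; exact hs
    obtain ⟨t, ht⟩ := this
    exact ⟨t, Finset.mem_biUnion.2 ⟨⟨0, hm0⟩, Finset.mem_univ _, ht⟩⟩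
  have huniv : (univ : Finset (Fin (k * m))) ∈ blockFamily B TT := by
    rw [hmem]
    refine ⟨G, ⟨Finset.Subset.refl _, ?_⟩, ?_⟩
    · obtain ⟨t, ht⟩ := hTne
      exact ⟨B ⟨0, hm0⟩ ∪ {t}, Finset.mem_image.2 ⟨(⟨0, hm0⟩, t),
        Finset.mem_product.2 ⟨Finset.mem_univ _, ht⟩, rfl⟩⟩
    · apply Finset.eq_univ_of_forall
      intro x
      rw [Finset.mem_sup]
      have hx : x ∈ (Finset.univ : Finset (Fin m)).biUnion B := by
        rw [hBcover]; exact Finset.mem_univ x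
      obtain ⟨i, _, hxi⟩ := Finset.mem_biUnion.1 hx
      obtain ⟨t, ht⟩ := hTne
      refine ⟨B i ∪ {t}, Finset.mem_image.2 ⟨(i, t),
        Finset.mem_product.2 ⟨Finset.mem_univ _, ht⟩, rfl⟩, ?_⟩
      simp [hxi]
  -- blockFamily closed under unions
  have hbfU : ∀ A ∈ blockFamily B TT, ∀ A' ∈ blockFamily B TT,
      A ∪ A' ∈ blockFamily B TT := by
    intro A hA A' hA'
    rw [hmem] at hA hA' ⊢
    obtain ⟨C, ⟨hC, hCne⟩, hCs⟩ := hA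
    obtain ⟨C', ⟨hC', hCne'⟩, hCs'⟩ := hA'
    refine ⟨C ∪ C', ⟨Finset.union_subset hC hC',
      hCne.mono (Finset.subset_union_left)⟩, ?_⟩
    rw [Finset.sup_union, hCs, hCs']; rfl
  constructor
  · intro A hA A' hA'
    rw [Finset.mem_union] at hA hA' ⊢
    rcases hA with hA | hA <;> rcases hA' with hA' | hA'
    · exact Or.inl (hbfU A hA A' hA')
    · obtain ⟨j, _, rfl⟩ := Finset.mem_image.1 hA'
      by_cases hj : j ∈ A
      · left
        have : A ∪ univ.erase j = univ := by
          apply Finset.eq_univ_of_forall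
          intro x
          by_cases hxj : x = j
          · subst hxj; exact Finset.mem_union_left _ hj
          · exact Finset.mem_union_right _ (Finset.mem_erase.2 ⟨hxj, Finset.mem_univ _⟩)
        rw [this]; exact huniv
      · right
        have : A ∪ univ.erase j = univ.erase j := by
          apply Finset.union_eq_right.2
          intro x hx
          exact Finset.mem_erase.2 ⟨fun h => hj (h ▸ hx), Finset.mem_univ _⟩
        rw [this]
        exact Finset.mem_image.2 ⟨j, Finset.mem_univ _, rfl⟩
    · obtain ⟨j, _, rfl⟩ := Finset.mem_image.1 hA
      by_cases hj : j ∈ A'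
      · left
        have : univ.erase j ∪ A' = univ := by
          apply Finset.eq_univ_of_forall
          intro x
          by_cases hxj : x = j
          · subst hxj; exact Finset.mem_union_right _ hj
          · exact Finset.mem_union_left _ (Finset.mem_erase.2 ⟨hxj, Finset.mem_univ _⟩)
        rw [this]; exact huniv
      · right
        have : univ.erase j ∪ A' = univ.erase j := by
          apply Finset.union_eq_left.2
          intro x hx
          exact Finset.mem_erase.2 ⟨fun h => hj (h ▸ hx), Finset.mem_univ _⟩
        rw [this]
        exact Finset.mem_image.2 ⟨j, Finset.mem_univ _, rfl⟩
    · obtain ⟨j, _, rfl⟩ := Finset.mem_image.1 hA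
      obtain ⟨j', _, rfl⟩ := Finset.mem_image.1 hA'
      by_cases hjj : j = j'
      · subst hjj
        right
        rw [Finset.union_self]
        exact Finset.mem_image.2 ⟨j, Finset.mem_univ _, rfl⟩
      · left
        have : univ.erase j ∪ univ.erase j' = univ := by
          apply Finset.eq_univ_of_forall
          intro x
          by_cases hxj : x = j
          · exact Finset.mem_union_right _ (Finset.mem_erase.2 ⟨hxj ▸ hjj, Finset.mem_univ _⟩)
          · exact Finset.mem_union_left _ (Finset.mem_erase.2 ⟨hxj, Finset.mem_univ _⟩)
        rw [this]; exact huniv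
  · intro i j hij
    refine ⟨univ.erase j, Finset.mem_union_right _
      (Finset.mem_image.2 ⟨j, Finset.mem_univ _, rfl⟩), ?_⟩
    have : univ.erase j ∩ {i, j} = {i} := by
      ext x
      simp only [Finset.mem_inter, Finset.mem_erase, Finset.mem_insert,
        Finset.mem_singleton, Finset.mem_univ, and_true, true_and]
      constructor
      · rintro ⟨hxj, hx | hx⟩
        · exact hx
        · exact absurd hx hxj
      · rintro rfl; exact ⟨hij, Or.inl rfl⟩
    rw [this, Finset.card_singleton]
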